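/- Let n ≥ 2, and let K be a simplicial complex on the vertex set [m] = {1,…,m} such that {i} ∈ K for every i ∈ [m]. Then the polyhedral product Z_K(Dⁿ, Sⁿ⁻¹) := ⋃_{σ ∈ K} {x ∈ (ℝⁿ)^m : ‖x_i‖ ≤ 1 for all i, and ‖x_i‖ = 1 for all i ∉ σ}, with the subspace topology of (ℝⁿ)^m, is simply connected. -/

import Mathlib

open Finset

/-- A simplicial complex: a collection of subsets of the vertex set, closed under
taking subsets and containing the empty set. -/
def IsComplex {V : Type*} (K : Set (Finset V)) : Prop :=
  ∅ ∈ K ∧ ∀ σ ∈ K, ∀ τ ⊆ σ, τ ∈ K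

/-- The polyhedral product `Z_K(Dⁿ, Sⁿ⁻¹)`: the set of `m`-tuples of points of the closed
unit ball of `ℝⁿ` such that, for some face `σ ∈ K`, every coordinate indexed outside `σ`
lies on the unit sphere. -/
def polyhedralProductDiskSphere (m n : ℕ) (K : Set (Finset (Fin m))) :
    Set (Fin m → EuclideanSpace ℝ (Fin n)) :=
  {x | ∃ σ ∈ K, (∀ i, ‖x i‖ ≤ 1) ∧ ∀ i ∉ σ, ‖x i‖ = 1}


open Finset Real
open scoped RealInnerProductSpace

variable {n : ℕ}

local notation "E" => EuclideanSpace ℝ (Fin n)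

lemma exists_unit_orthogonal (hn : 2 ≤ n) (a : E) :
    ∃ w : E, ‖w‖ = 1 ∧ (inner ℝ a w : ℝ) = 0 := by
  have hdim : Module.finrank ℝ E = n := finrank_euclideanSpace_fin
  have h : (ℝ ∙ a)ᗮ ≠ ⊥ := by
    intro hbot
    have htop : (ℝ ∙ a) = ⊤ := Submodule.orthogonal_eq_bot_iff.mp hbot
    rcases eq_or_ne a 0 with h0 | h0
    · rw [h0, Submodule.span_zero_singleton] at htop
      have hb : Module.finrank ℝ (⊤ : Submodule ℝ E) = 0 := by
        rw [← htop]; exact finrank_bot ℝ E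
      rw [finrank_top] at hb
      omega
    · have := finrank_span_singleton (K := ℝ) h0
      rw [htop, finrank_top] at this
      omega
  obtain ⟨w, hw, hw0⟩ := Submodule.exists_mem_ne_zero_of_ne_bot h
  refine ⟨‖w‖⁻¹ • w, ?_, ?_⟩
  · rw [norm_smul, norm_inv, norm_norm, inv_mul_cancel₀ (norm_ne_zero_iff.mpr hw0)]
  · rw [real_inner_smul_right]
    have : (inner ℝ a w : ℝ) = 0 := by
      have := (Submodule.mem_orthogonal (ℝ ∙ a) w).mp hw a (Submodule.mem_span_singleton_self a)
      exact this
    rw [this, mul_zero]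

lemma eq_of_sq_eq_sq'' {A B : ℝ} (hA : 0 ≤ A) (hB : 0 ≤ B) (h : A ^ 2 = B ^ 2) : A = B := by
  nlinarith

lemma norm_eq_one_of_sq {x : ℝ} (h : x ^ 2 = 1) (h0 : 0 ≤ x) : x = 1 := by nlinarith

lemma slerp_exists (hn : 2 ≤ n) (a b : E) (ha : ‖a‖ = 1) (hb : ‖b‖ = 1) :
    ∃ p : ℝ → E, Continuous p ∧ p 0 = a ∧ p 1 = b ∧ (∀ t, ‖p t‖ = 1) ∧
      ∀ u v : ℝ, u ∈ Set.Icc (0:ℝ) 1 → v ∈ Set.Icc (0:ℝ) 1 →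
        ‖p u - p v‖ ≤ 4 * |u - v| ∧ ‖p u - p v‖ ≤ ‖a - b‖ := by
  set x : ℝ := inner ℝ a b with hxdef
  have hx1 : |x| ≤ 1 := by
    have := abs_real_inner_le_norm a b
    rwa [ha, hb, one_mul] at this
  have hxl : -1 ≤ x := neg_le_of_abs_le hx1
  have hxr : x ≤ 1 := le_of_abs_le hx1
  set θ := Real.arccos x with hθdef
  have hθ0 : 0 ≤ θ := Real.arccos_nonneg x
  have hθπ : θ ≤ π := Real.arccos_le_pi x
  have hcos : Real.cos θ = x := Real.cos_arccos hxl hxr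
  have hsin : Real.sin θ = Real.sqrt (1 - x ^ 2) := Real.sin_arccos x
  have haa : (inner ℝ a a : ℝ) = 1 := by
    rw [real_inner_self_eq_norm_sq, ha]; norm_num
  -- find w
  obtain ⟨w, hw1, hwa, hwb⟩ : ∃ w : E, ‖w‖ = 1 ∧ (inner ℝ a w : ℝ) = 0 ∧
      b = x • a + Real.sqrt (1 - x ^ 2) • w := by
    set d := b - x • a with hddef
    have had : (inner ℝ a d : ℝ) = 0 := by
      rw [hddef, inner_sub_right, real_inner_smul_right, haa, mul_one, ← hxdef, sub_self]
    have hd2 : ‖d‖ ^ 2 = 1 - x ^ 2 := by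
      rw [hddef, norm_sub_sq_real, real_inner_smul_right, norm_smul, hb,
        Real.norm_eq_abs, ha]
      have hc : (inner ℝ b a : ℝ) = x := by rw [real_inner_comm]
      rw [hc]
      simp only [one_pow, mul_one]
      rw [sq_abs]
      ring
    rcases eq_or_ne d 0 with hd | hd
    · obtain ⟨w, hw1, hwa⟩ := exists_unit_orthogonal hn a
      refine ⟨w, hw1, hwa, ?_⟩
      have hx2 : 1 - x ^ 2 = 0 := by rw [← hd2, hd]; simp
      rw [hx2, Real.sqrt_zero, zero_smul, add_zero]
      have : b - x • a = 0 := hd ▸ rfl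
      linear_combination (norm := module) this
    · refine ⟨‖d‖⁻¹ • d, ?_, ?_, ?_⟩
      · rw [norm_smul, norm_inv, norm_norm, inv_mul_cancel₀ (norm_ne_zero_iff.mpr hd)]
      · rw [real_inner_smul_right, had, mul_zero]
      · have hdn : Real.sqrt (1 - x ^ 2) = ‖d‖ := by
          rw [← hd2, Real.sqrt_sq (norm_nonneg d)]
        rw [hdn, smul_smul, mul_inv_cancel₀ (norm_ne_zero_iff.mpr hd), one_smul, hddef]
        module
  refine ⟨fun t => Real.cos (θ * t) • a + Real.sin (θ * t) • w, ?_, ?_, ?_, ?_, ?_⟩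
  · exact ((Real.continuous_cos.comp (continuous_const.mul continuous_id)).smul
      continuous_const).add ((Real.continuous_sin.comp
      (continuous_const.mul continuous_id)).smul continuous_const)
  · simp
  · simp only [mul_one, hcos, hsin, ← hwb]
  · intro t
    have hsq : ‖Real.cos (θ * t) • a + Real.sin (θ * t) • w‖ ^ 2 = 1 := by
      rw [norm_add_sq_real, real_inner_smul_left, real_inner_smul_right, hwa]
      rw [norm_smul, norm_smul, Real.norm_eq_abs, Real.norm_eq_abs, ha, hw1]
      simp only [mul_one, mul_zero, add_zero]
      rw [sq_abs, sq_abs]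
      linear_combination Real.sin_sq_add_cos_sq (θ * t)
    exact norm_eq_one_of_sq hsq (norm_nonneg _)
  · intro u v hu hv
    have hdiff : ∀ s t : ℝ,
        ‖(Real.cos s • a + Real.sin s • w) - (Real.cos t • a + Real.sin t • w)‖
          = 2 * |Real.sin ((s - t) / 2)| := by
      intro s t
      have heq : (Real.cos s • a + Real.sin s • w) - (Real.cos t • a + Real.sin t • w)
          = (Real.cos s - Real.cos t) • a + (Real.sin s - Real.sin t) • w := by module
      have hsq : ‖(Real.cos s - Real.cos t) • a + (Real.sin s - Real.sin t) • w‖ ^ 2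
          = 2 - 2 * Real.cos (s - t) := by
        rw [norm_add_sq_real, real_inner_smul_left, real_inner_smul_right, hwa]
        rw [norm_smul, norm_smul, Real.norm_eq_abs, Real.norm_eq_abs, ha, hw1]
        simp only [mul_one, mul_zero, add_zero]
        rw [sq_abs, sq_abs]
        linear_combination 2 * Real.cos_sub s t + Real.sin_sq_add_cos_sq s +
          Real.sin_sq_add_cos_sq t
      have hhalf : Real.sin ((s - t) / 2) ^ 2 = (1 - Real.cos (s - t)) / 2 := by
        rw [← sq_abs, Real.abs_sin_half, Real.sq_sqrt]
        linarith [Real.cos_le_one (s - t)]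
      rw [heq]
      have h2 : ‖(Real.cos s - Real.cos t) • a + (Real.sin s - Real.sin t) • w‖ ^ 2
          = (2 * |Real.sin ((s - t) / 2)|) ^ 2 := by
        rw [hsq]
        nlinarith [sq_abs (Real.sin ((s - t) / 2))]
      exact eq_of_sq_eq_sq'' (norm_nonneg _) (by positivity) h2
    have huv1 : |u - v| ≤ 1 := by
      rw [abs_sub_le_iff]
      constructor <;> [linarith [hu.1, hu.2, hv.1, hv.2]; linarith [hu.1, hu.2, hv.1, hv.2]]
    have hmain := hdiff (θ * u) (θ * v)
    have hz : (θ * u - θ * v) / 2 = θ * (u - v) / 2 := by ring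
    rw [hz] at hmain
    have habs : |θ * (u - v) / 2| ≤ θ / 2 := by
      rw [abs_div, abs_mul, abs_of_nonneg hθ0, abs_of_nonneg (by norm_num : (0:ℝ) ≤ 2)]
      have : θ * |u - v| ≤ θ * 1 := mul_le_mul_of_nonneg_left huv1 hθ0
      linarith
    have hθ2 : θ / 2 ≤ π / 2 := by linarith
    have hsinmono : ∀ z : ℝ, |z| ≤ θ / 2 → |Real.sin z| ≤ Real.sin (θ / 2) := by
      intro z hzle
      have hzpi : |z| ≤ π := by linarith [Real.pi_pos, hzle.trans hθ2]
      have h1 : |Real.sin z| = Real.sin |z| := by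
        rcases le_or_gt 0 z with hz0 | hz0
        · rw [abs_of_nonneg hz0]
          exact abs_of_nonneg (Real.sin_nonneg_of_nonneg_of_le_pi hz0
            (by rwa [abs_of_nonneg hz0] at hzpi))
        · rw [abs_of_neg hz0]
          have e : |Real.sin z| = |Real.sin (-z)| := by rw [Real.sin_neg, abs_neg]
          rw [e]
          exact abs_of_nonneg (Real.sin_nonneg_of_nonneg_of_le_pi (by linarith)
            (by rwa [abs_of_neg hz0] at hzpi))
      rw [h1]
      have hmem1 : |z| ∈ Set.Icc (-(π/2)) (π/2) :=
        ⟨by linarith [abs_nonneg z, Real.pi_pos], hzle.trans hθ2⟩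
      have hmem2 : θ / 2 ∈ Set.Icc (-(π/2)) (π/2) := ⟨by linarith [Real.pi_pos], hθ2⟩
      exact Real.strictMonoOn_sin.monotoneOn hmem1 hmem2 hzle
    have habd : ‖a - b‖ = 2 * Real.sin (θ / 2) := by
      have h10 := hdiff (θ * 1) (θ * 0)
      have e1 : Real.cos (θ * 1) • a + Real.sin (θ * 1) • w = b := by
        rw [mul_one, hcos, hsin]; exact hwb.symm
      have e0 : Real.cos (θ * 0) • a + Real.sin (θ * 0) • w = a := by simp
      rw [e1, e0] at h10
      have hz2 : (θ * 1 - θ * 0) / 2 = θ / 2 := by ring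
      rw [hz2] at h10
      rw [norm_sub_rev, h10, abs_of_nonneg]
      apply Real.sin_nonneg_of_nonneg_of_le_pi <;> linarith [Real.pi_pos]
    constructor
    · rw [hmain]
      have h1 : |Real.sin (θ * (u - v) / 2)| ≤ |θ * (u - v) / 2| := Real.abs_sin_le_abs
      have habs2 : |θ * (u - v) / 2| = θ * |u - v| / 2 := by
        rw [abs_div, abs_mul, abs_of_nonneg hθ0, abs_of_nonneg (by norm_num : (0:ℝ) ≤ 2)]
      have h4 : θ * |u - v| ≤ 4 * |u - v| :=
        mul_le_mul_of_nonneg_right (hθπ.trans Real.pi_le_four) (abs_nonneg _)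
      rw [habs2] at h1
      linarith
    · rw [hmain, habd]
      have := hsinmono (θ * (u - v) / 2) habs
      linarith

lemma sphere_fill (hn : 2 ≤ n) (c : ℝ → E) (hc : Continuous c)
    (h0 : ‖c 0‖ = 1) (h1 : ‖c 1‖ = 1) :
    ∃ c' : ℝ → E, ContinuousOn c' (Set.Icc 0 1) ∧
      (∀ s ∈ Set.Icc (0:ℝ) 1, ‖c' s‖ = 1) ∧
      (∀ s ∈ Set.Icc (0:ℝ) 1, ‖c s‖ = 1 → c' s = c s) := by
  classical
  set F : Set ℝ := {s | s ∈ Set.Icc (0:ℝ) 1 ∧ ‖c s‖ = 1} with hFdef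
  have hFclosed : IsClosed F := by
    have : F = Set.Icc (0:ℝ) 1 ∩ {s | ‖c s‖ = 1} := by
      ext s; simp [hFdef, Set.mem_setOf_eq, Set.mem_inter_iff]
    rw [this]
    exact isClosed_Icc.inter (isClosed_eq hc.norm continuous_const)
  have h0F : (0:ℝ) ∈ F := ⟨⟨le_refl 0, zero_le_one⟩, h0⟩
  have h1F : (1:ℝ) ∈ F := ⟨⟨zero_le_one, le_refl 1⟩, h1⟩
  have hFnorm : ∀ t ∈ F, ‖c t‖ = 1 := fun t ht => ht.2
  have hFIcc : F ⊆ Set.Icc (0:ℝ) 1 := fun t ht => ht.1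
  have hex : ∀ X Y : ℝ, ∃ p : ℝ → E, ‖c X‖ = 1 → ‖c Y‖ = 1 →
      Continuous p ∧ p 0 = c X ∧ p 1 = c Y ∧ (∀ t, ‖p t‖ = 1) ∧
        ∀ u v : ℝ, u ∈ Set.Icc (0:ℝ) 1 → v ∈ Set.Icc (0:ℝ) 1 →
          ‖p u - p v‖ ≤ 4 * |u - v| ∧ ‖p u - p v‖ ≤ ‖c X - c Y‖ := by
    intro X Y
    by_cases hX : ‖c X‖ = 1
    · by_cases hY : ‖c Y‖ = 1
      · obtain ⟨p, h⟩ := slerp_exists hn (c X) (c Y) hX hY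
        exact ⟨p, fun _ _ => h⟩
      · exact ⟨fun _ => 0, fun _ h => absurd h hY⟩
    · exact ⟨fun _ => 0, fun h _ => absurd h hX⟩
  choose P hP using hex
  set A : ℝ → ℝ := fun s => sSup (F ∩ Set.Iic s) with hAdef
  set B : ℝ → ℝ := fun s => sInf (F ∩ Set.Ici s) with hBdef
  have hAfact : ∀ s, s ∈ Set.Icc (0:ℝ) 1 → s ∉ F → A s ∈ F ∧ A s < s := by
    intro s hs hsF
    have hne : (F ∩ Set.Iic s).Nonempty := ⟨0, h0F, hs.1⟩
    have hbdd : BddAbove (F ∩ Set.Iic s) := ⟨s, fun t ht => ht.2⟩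
    have hclosed : IsClosed (F ∩ Set.Iic s) := hFclosed.inter isClosed_Iic
    have hmem := hclosed.csSup_mem hne hbdd
    have hle : A s ≤ s := csSup_le hne fun t ht => ht.2
    exact ⟨hmem.1, lt_of_le_of_ne hle fun h => hsF (h ▸ hmem.1)⟩
  have hBfact : ∀ s, s ∈ Set.Icc (0:ℝ) 1 → s ∉ F → B s ∈ F ∧ s < B s := by
    intro s hs hsF
    have hne : (F ∩ Set.Ici s).Nonempty := ⟨1, h1F, hs.2⟩
    have hbdd : BddBelow (F ∩ Set.Ici s) := ⟨s, fun t ht => ht.2⟩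
    have hclosed : IsClosed (F ∩ Set.Ici s) := hFclosed.inter isClosed_Ici
    have hmem := hclosed.csInf_mem hne hbdd
    have hle : s ≤ B s := le_csInf hne fun t ht => ht.2
    exact ⟨hmem.1, lt_of_le_of_ne hle fun h => hsF (h ▸ hmem.1)⟩
  have hgapA : ∀ s, ∀ t ∈ F, t ≤ s → t ≤ A s := by
    intro s t ht hts
    exact le_csSup ⟨s, fun r hr => hr.2⟩ ⟨ht, hts⟩
  have hgapB : ∀ s, ∀ t ∈ F, s ≤ t → B s ≤ t := by
    intro s t ht hts
    exact csInf_le ⟨s, fun r hr => hr.2⟩ ⟨ht, hts⟩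
  set c' : ℝ → E := fun s => if s ∈ F then c s
    else P (A s) (B s) ((s - A s) / (B s - A s)) with hc'def
  have hu01 : ∀ s, s ∈ Set.Icc (0:ℝ) 1 → s ∉ F →
      (s - A s) / (B s - A s) ∈ Set.Icc (0:ℝ) 1 := by
    intro s hs hsF
    obtain ⟨_, hAs⟩ := hAfact s hs hsF
    obtain ⟨_, hBs⟩ := hBfact s hs hsF
    have hba : 0 < B s - A s := by linarith
    constructor
    · apply div_nonneg <;> linarith
    · rw [div_le_one hba]; linarith
  have hval : ∀ s, s ∈ Set.Icc (0:ℝ) 1 → s ∉ F →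
      Continuous (P (A s) (B s)) ∧ P (A s) (B s) 0 = c (A s) ∧
        P (A s) (B s) 1 = c (B s) ∧ (∀ t, ‖P (A s) (B s) t‖ = 1) ∧
        ∀ u v : ℝ, u ∈ Set.Icc (0:ℝ) 1 → v ∈ Set.Icc (0:ℝ) 1 →
          ‖P (A s) (B s) u - P (A s) (B s) v‖ ≤ 4 * |u - v| ∧
          ‖P (A s) (B s) u - P (A s) (B s) v‖ ≤ ‖c (A s) - c (B s)‖ := by
    intro s hs hsF
    exact hP (A s) (B s) (hFnorm _ (hAfact s hs hsF).1) (hFnorm _ (hBfact s hs hsF).1)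
  refine ⟨c', ?_, ?_, ?_⟩
  · -- continuity
    intro s₀ hs₀
    by_cases hs₀F : s₀ ∈ F
    · -- hard case : point of F
      rw [Metric.continuousWithinAt_iff]
      intro ε hε
      obtain ⟨δ', hδ'pos, hδ'⟩ :=
        Metric.continuousAt_iff.mp hc.continuousAt (ε / 8) (by positivity)
      set δ : ℝ := min (δ' / 4) (ε * δ' / 64) with hδdef
      have hδpos : 0 < δ := by
        apply lt_min
        · linarith
        · nlinarith [mul_pos hε hδ'pos]
      have hδ1 : δ ≤ δ' / 4 := min_le_left _ _
      have hδ2 : δ ≤ ε * δ' / 64 := min_le_right _ _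
      refine ⟨δ, hδpos, ?_⟩
      intro s hsIcc hdss
      have hc's₀ : c' s₀ = c s₀ := if_pos hs₀F
      by_cases hsF : s ∈ F
      · rw [hc's₀, hc'def]
        simp only [if_pos hsF]
        exact (hδ' (by linarith [hdss] : dist s s₀ < δ')).trans_le (by linarith)
      · obtain ⟨hAF, hAs⟩ := hAfact s hsIcc hsF
        obtain ⟨hBF, hBs⟩ := hBfact s hsIcc hsF
        obtain ⟨hPc, hP0, hP1, hPn, hPb⟩ := hval s hsIcc hsF
        have hba : 0 < B s - A s := by linarith
        have hu : (s - A s) / (B s - A s) ∈ Set.Icc (0:ℝ) 1 := hu01 s hsIcc hsF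
        have hc's : c' s = P (A s) (B s) ((s - A s) / (B s - A s)) := if_neg hsF
        have hne : s ≠ s₀ := fun h => hsF (h ▸ hs₀F)
        have hdss' : |s - s₀| < δ := by rwa [Real.dist_eq] at hdss
        rw [hc's, hc's₀, dist_eq_norm]
        rcases lt_or_gt_of_ne hne with hlt | hgt
        · -- s < s₀, use right endpoint
          have hBle : B s ≤ s₀ := hgapB s s₀ hs₀F hlt.le
          have hss₀ : s₀ - s < δ := by
            rcases abs_cases (s - s₀) with ⟨h, _⟩ | ⟨h, _⟩ <;> linarith
          have hcB : ‖c (B s) - c s₀‖ < ε / 8 := by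
            have : dist (B s) s₀ < δ' := by
              rw [Real.dist_eq, abs_of_nonpos (by linarith)]
              linarith
            have := hδ' this
            rwa [dist_eq_norm] at this
          have htri : ‖P (A s) (B s) ((s - A s) / (B s - A s)) - c s₀‖ ≤
              ‖P (A s) (B s) ((s - A s) / (B s - A s)) - P (A s) (B s) 1‖ +
                ‖c (B s) - c s₀‖ := by
            rw [hP1] at *
            exact norm_sub_le_norm_sub_add_norm_sub _ _ _
          by_cases hnear : s₀ - δ' / 2 < A s
          · have hcA : ‖c (A s) - c s₀‖ < ε / 8 := by
              have : dist (A s) s₀ < δ' := by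
                rw [Real.dist_eq, abs_of_nonpos (by linarith)]
                linarith
              have := hδ' this
              rwa [dist_eq_norm] at this
            have hb2 := (hPb _ 1 hu ⟨zero_le_one, le_refl 1⟩).2
            have hAB : ‖c (A s) - c (B s)‖ < ε / 4 := by
              have h3 := norm_sub_le_norm_sub_add_norm_sub (c (A s)) (c s₀) (c (B s))
              have h4 : ‖c s₀ - c (B s)‖ = ‖c (B s) - c s₀‖ := norm_sub_rev _ _
              linarith
            linarith
          · push_neg at hnear
            have h1u : |(s - A s) / (B s - A s) - 1| = (B s - s) / (B s - A s) := by
              rw [abs_of_nonpos (by linarith [(hu01 s hsIcc hsF).2])]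
              field_simp; ring
            have hb1 := (hPb _ 1 hu ⟨zero_le_one, le_refl 1⟩).1
            rw [h1u] at hb1
            have hbig : δ' / 4 ≤ B s - A s := by linarith
            have hnum : B s - s < δ := by linarith
            have hquot : (B s - s) / (B s - A s) ≤ δ / (δ' / 4) :=
              div_le_div₀ (le_of_lt hδpos) hnum.le (by linarith) hbig
            have hq2 : δ / (δ' / 4) ≤ (ε * δ' / 64) / (δ' / 4) :=
              (div_le_div_iff_of_pos_right (by linarith)).mpr hδ2
            have hq3 : (ε * δ' / 64) / (δ' / 4) = ε / 16 := by
              field_simp; ring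
            linarith
        · -- s > s₀, use left endpoint
          have hAge : s₀ ≤ A s := hgapA s s₀ hs₀F hgt.le
          have hss₀ : s - s₀ < δ := by
            rcases abs_cases (s - s₀) with ⟨h, _⟩ | ⟨h, _⟩ <;> linarith
          have hcA : ‖c (A s) - c s₀‖ < ε / 8 := by
            have : dist (A s) s₀ < δ' := by
              rw [Real.dist_eq, abs_of_nonneg (by linarith)]
              linarith
            have := hδ' this
            rwa [dist_eq_norm] at this
          have htri : ‖P (A s) (B s) ((s - A s) / (B s - A s)) - c s₀‖ ≤
              ‖P (A s) (B s) ((s - A s) / (B s - A s)) - P (A s) (B s) 0‖ +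
                ‖c (A s) - c s₀‖ := by
            rw [hP0] at *
            exact norm_sub_le_norm_sub_add_norm_sub _ _ _
          by_cases hnear : B s < s₀ + δ' / 2
          · have hcB : ‖c (B s) - c s₀‖ < ε / 8 := by
              have : dist (B s) s₀ < δ' := by
                rw [Real.dist_eq, abs_of_nonneg (by linarith)]
                linarith
              have := hδ' this
              rwa [dist_eq_norm] at this
            have hb2 := (hPb _ 0 hu ⟨le_refl 0, zero_le_one⟩).2
            have hAB : ‖c (A s) - c (B s)‖ < ε / 4 := by
              have h3 := norm_sub_le_norm_sub_add_norm_sub (c (A s)) (c s₀) (c (B s))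
              have h4 : ‖c s₀ - c (B s)‖ = ‖c (B s) - c s₀‖ := norm_sub_rev _ _
              linarith
            linarith
          · push_neg at hnear
            have h1u : |(s - A s) / (B s - A s) - 0| = (s - A s) / (B s - A s) := by
              rw [sub_zero, abs_of_nonneg (hu01 s hsIcc hsF).1]
            have hb1 := (hPb _ 0 hu ⟨le_refl 0, zero_le_one⟩).1
            rw [h1u] at hb1
            have hbig : δ' / 4 ≤ B s - A s := by linarith
            have hnum : s - A s < δ := by linarith
            have hquot : (s - A s) / (B s - A s) ≤ δ / (δ' / 4) :=
              div_le_div₀ (le_of_lt hδpos) hnum.le (by linarith) hbig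
            have hq2 : δ / (δ' / 4) ≤ (ε * δ' / 64) / (δ' / 4) :=
              (div_le_div_iff_of_pos_right (by linarith)).mpr hδ2
            have hq3 : (ε * δ' / 64) / (δ' / 4) = ε / 16 := by
              field_simp; ring
            linarith
    · -- easy case : s₀ ∉ F
      obtain ⟨hAF, hAs⟩ := hAfact s₀ hs₀ hs₀F
      obtain ⟨hBF, hBs⟩ := hBfact s₀ hs₀ hs₀F
      have hgap : ∀ t ∈ F, t ≤ A s₀ ∨ B s₀ ≤ t := by
        intro t ht
        rcases le_or_gt t s₀ with h | h
        · exact Or.inl (hgapA s₀ t ht h)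
        · exact Or.inr (hgapB s₀ t ht h.le)
      have hsub : Set.Ioo (A s₀) (B s₀) ⊆ Set.Icc (0:ℝ) 1 := by
        intro t ht
        exact ⟨(hFIcc hAF).1.trans ht.1.le, ht.2.le.trans (hFIcc hBF).2⟩
      have hnotF : ∀ t ∈ Set.Ioo (A s₀) (B s₀), t ∉ F := by
        intro t ht htF
        rcases hgap t htF with h | h
        · exact absurd ht.1 (not_lt.mpr h)
        · exact absurd ht.2 (not_lt.mpr h)
      have hconst : ∀ t ∈ Set.Ioo (A s₀) (B s₀), A t = A s₀ ∧ B t = B s₀ := by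
        intro t ht
        constructor
        · apply le_antisymm
          · obtain ⟨hAtF, hAt⟩ := hAfact t (hsub ht) (hnotF t ht)
            rcases hgap (A t) hAtF with h | h
            · exact h
            · exact absurd (lt_of_le_of_lt hAt.le ht.2) (not_lt.mpr h)
          · exact hgapA t (A s₀) hAF ht.1.le
        · apply le_antisymm
          · exact hgapB t (B s₀) hBF ht.2.le
          · obtain ⟨hBtF, hBt⟩ := hBfact t (hsub ht) (hnotF t ht)
            rcases hgap (B t) hBtF with h | h
            · exact absurd (lt_of_lt_of_le ht.1 hBt.le) (not_lt.mpr h)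
            · exact h
      obtain ⟨hPc, _, _, _, _⟩ := hval s₀ hs₀ hs₀F
      have hgc : ContinuousAt
          (fun s => P (A s₀) (B s₀) ((s - A s₀) / (B s₀ - A s₀))) s₀ := by
        apply hPc.continuousAt.comp
        exact ((continuous_id.sub continuous_const).div_const _).continuousAt
      have heq : ∀ t ∈ Set.Ioo (A s₀) (B s₀), c' t
          = P (A s₀) (B s₀) ((t - A s₀) / (B s₀ - A s₀)) := by
        intro t ht
        obtain ⟨hA', hB'⟩ := hconst t ht
        rw [hc'def]
        simp only [if_neg (hnotF t ht)]
        rw [hA', hB']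
      have hev : c' =ᶠ[nhds s₀] fun s => P (A s₀) (B s₀) ((s - A s₀) / (B s₀ - A s₀)) :=
        Filter.eventuallyEq_of_mem (isOpen_Ioo.mem_nhds ⟨hAs, hBs⟩) heq
      exact (hgc.congr hev.symm).continuousWithinAt
  · -- norm 1
    intro s hs
    by_cases hsF : s ∈ F
    · rw [hc'def]; simp only [if_pos hsF]; exact hsF.2
    · rw [hc'def]; simp only [if_neg hsF]
      exact (hval s hs hsF).2.2.2.1 _
  · -- agreement
    intro s hs hnorm
    have hmem : s ∈ F := ⟨hs, hnorm⟩
    rw [hc'def]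
    exact if_pos hmem

open CategoryTheory

attribute [local instance] Path.Homotopic.setoid

lemma simplyConnectedSpace_of_loops {X : Type*} [TopologicalSpace X]
    [PathConnectedSpace X] (x₀ : X)
    (h : ∀ p : Path x₀ x₀, p.Homotopic (Path.refl x₀)) :
    SimplyConnectedSpace X := by
  rw [simply_connected_iff_paths_homotopic]
  refine ⟨inferInstance, fun x y => ?_⟩
  constructor
  intro f g
  have hloop : ∀ e : (FundamentalGroupoid.mk x₀) ⟶ (FundamentalGroupoid.mk x₀),
      e = 𝟙 (FundamentalGroupoid.mk x₀) := by
    intro e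
    induction e using Quotient.inductionOn with
    | h p => exact Quotient.sound (h p)
  let f' : (FundamentalGroupoid.mk x) ⟶ (FundamentalGroupoid.mk y) := f
  let g' : (FundamentalGroupoid.mk x) ⟶ (FundamentalGroupoid.mk y) := g
  let r : (FundamentalGroupoid.mk x₀) ⟶ (FundamentalGroupoid.mk x) :=
    ⟦PathConnectedSpace.somePath x₀ x⟧
  have h1 : (r ≫ f') ≫ CategoryTheory.Groupoid.inv (r ≫ g')
      = 𝟙 (FundamentalGroupoid.mk x₀) := hloop _
  have h2 : r ≫ f' = r ≫ g' := by
    have h2' := congrArg (fun z => z ≫ (r ≫ g')) h1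
    simpa [Category.assoc, Groupoid.inv_comp] using h2'
  have h3 : f' = g' := by
    have h3' := congrArg (fun z => CategoryTheory.Groupoid.inv r ≫ z) h2
    simpa [← Category.assoc, Groupoid.inv_comp] using h3'
  exact h3

/-- For `n ≥ 2` and a simplicial complex `K` on `[m]` containing all singletons, the
polyhedral product `Z_K(Dⁿ, Sⁿ⁻¹)` is simply connected. -/
theorem polyhedralProductDiskSphere_simplyConnected {m n : ℕ} (hn : 2 ≤ n)
    (K : Set (Finset (Fin m))) (hK : IsComplex K)
    (hvert : ∀ i : Fin m, ({i} : Finset (Fin m)) ∈ K) :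
    SimplyConnectedSpace ↥(polyhedralProductDiskSphere m n K) := by
  classical
  set Z := polyhedralProductDiskSphere m n K with hZdef
  have hn0 : 0 < n := by omega
  set e : EuclideanSpace ℝ (Fin n) := EuclideanSpace.single ⟨0, hn0⟩ 1 with hedef
  have he : ‖e‖ = 1 := by rw [hedef, EuclideanSpace.norm_single]; norm_num
  have hmemT : ∀ x : Fin m → EuclideanSpace ℝ (Fin n), (∀ i, ‖x i‖ = 1) → x ∈ Z := by
    intro x hx
    exact ⟨∅, hK.1, fun i => (hx i).le, fun i _ => hx i⟩
  set x₀ : ↥Z := ⟨fun _ => e, hmemT _ fun _ => he⟩ with hx₀def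
  -- path connectedness
  have hjoin : ∀ x : ↥Z, Joined x x₀ := by
    intro x
    obtain ⟨σ, hσ, hxle, hxout⟩ := x.2
    set y : Fin m → EuclideanSpace ℝ (Fin n) :=
      fun i => if ‖(x : Fin m → EuclideanSpace ℝ (Fin n)) i‖ = 1
        then (x : Fin m → EuclideanSpace ℝ (Fin n)) i else e with hydef
    have hy : ∀ i, ‖y i‖ = 1 := by
      intro i; rw [hydef]; dsimp only; split
      · assumption
      · exact he
    have hleg1 : Joined x (⟨y, hmemT y hy⟩ : ↥Z) := by
      refine ⟨⟨⟨fun t => ⟨fun i =>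
        if ‖(x : Fin m → EuclideanSpace ℝ (Fin n)) i‖ = 1
          then (x : Fin m → EuclideanSpace ℝ (Fin n)) i
          else (1 - (t:ℝ)) • (x : Fin m → EuclideanSpace ℝ (Fin n)) i + (t:ℝ) • e, ?_⟩, ?_⟩,
        ?_, ?_⟩⟩
      · refine ⟨σ, hσ, ?_, ?_⟩
        · intro i
          dsimp only; split
          · exact hxle i
          · have ht0 : (0:ℝ) ≤ (t:ℝ) := t.2.1
            have ht1 : (t:ℝ) ≤ 1 := t.2.2
            calc ‖(1 - (t:ℝ)) • (x : Fin m → EuclideanSpace ℝ (Fin n)) i + (t:ℝ) • e‖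
                ≤ ‖(1 - (t:ℝ)) • (x : Fin m → EuclideanSpace ℝ (Fin n)) i‖ + ‖(t:ℝ) • e‖ :=
                  norm_add_le _ _
              _ = (1 - (t:ℝ)) * ‖(x : Fin m → EuclideanSpace ℝ (Fin n)) i‖ + (t:ℝ) * ‖e‖ := by
                  rw [norm_smul, norm_smul, Real.norm_eq_abs, Real.norm_eq_abs,
                    abs_of_nonneg (by linarith), abs_of_nonneg ht0]
              _ ≤ (1 - (t:ℝ)) * 1 + (t:ℝ) * 1 := by
                  have := hxle i
                  have := he
                  apply add_le_add
                  · apply mul_le_mul_of_nonneg_left (hxle i) (by linarith)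
                  · rw [he]
              _ = 1 := by ring
        · intro i hiσ
          have h1 := hxout i hiσ
          dsimp only
          rw [if_pos h1]
          exact h1
      · apply Continuous.subtype_mk
        apply continuous_pi; intro i
        split
        · exact continuous_const
        · exact ((continuous_const.sub continuous_subtype_val).smul continuous_const).add
            (continuous_subtype_val.smul continuous_const)
      · apply Subtype.ext; funext i
        by_cases h : ‖(x : Fin m → EuclideanSpace ℝ (Fin n)) i‖ = 1 <;>
          simp [h]
      · apply Subtype.ext; funext i
        by_cases h : ‖(x : Fin m → EuclideanSpace ℝ (Fin n)) i‖ = 1 <;>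
          simp [hydef, h]
    have hleg2 : Joined (⟨y, hmemT y hy⟩ : ↥Z) x₀ := by
      choose p hpc hp0 hp1 hpn _ using fun i => slerp_exists hn (y i) e (hy i) he
      refine ⟨⟨⟨fun t => ⟨fun i => p i (t:ℝ), hmemT _ fun i => hpn i _⟩, ?_⟩, ?_, ?_⟩⟩
      · apply Continuous.subtype_mk
        apply continuous_pi; intro i
        exact (hpc i).comp continuous_subtype_val
      · apply Subtype.ext; funext i
        show p i ((0 : unitInterval) : ℝ) = y i
        rw [Set.Icc.coe_zero]
        exact hp0 i
      · apply Subtype.ext; funext i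
        show p i ((1 : unitInterval) : ℝ) = (x₀ : Fin m → EuclideanSpace ℝ (Fin n)) i
        rw [Set.Icc.coe_one]
        exact hp1 i
    exact hleg1.trans hleg2
  have hpcs : PathConnectedSpace ↥Z := ⟨⟨x₀⟩, fun x y => (hjoin x).trans (hjoin y).symm⟩
  -- contract loops at x₀
  refine @simplyConnectedSpace_of_loops _ _ hpcs x₀ ?_
  intro δ
  set q : ℝ → (Fin m → EuclideanSpace ℝ (Fin n)) :=
    fun s => ((δ.extend s : ↥Z) : Fin m → EuclideanSpace ℝ (Fin n)) with hqdef
  have hqc : Continuous q := continuous_subtype_val.comp δ.continuous_extend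
  have hqmem : ∀ s, q s ∈ Z := fun s => (δ.extend s).2
  have hci : ∀ i, Continuous fun s => q s i := fun i => (continuous_apply i).comp hqc
  have hq0 : q 0 = fun _ => e := by
    rw [hqdef]
    dsimp only
    rw [Path.extend_zero]
  have hq1 : q 1 = fun _ => e := by
    rw [hqdef]
    dsimp only
    rw [Path.extend_one]
  have hqle : ∀ s i, ‖q s i‖ ≤ 1 := by
    intro s i
    obtain ⟨τ, _, hle, _⟩ := hqmem s
    exact hle i
  choose c' hc'cont hc'norm hc'eq using fun i : Fin m =>
    sphere_fill hn (fun s => q s i) (hci i)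
      (by show ‖q 0 i‖ = 1; rw [show q 0 i = e from congrFun hq0 i]; exact he)
      (by show ‖q 1 i‖ = 1; rw [show q 1 i = e from congrFun hq1 i]; exact he)
  have hc'0 : ∀ i, c' i 0 = e := by
    intro i
    rw [hc'eq i 0 (by norm_num)
      (by show ‖q 0 i‖ = 1; rw [show q 0 i = e from congrFun hq0 i]; exact he)]
    exact congrFun hq0 i
  have hc'1 : ∀ i, c' i 1 = e := by
    intro i
    rw [hc'eq i 1 (by norm_num)
      (by show ‖q 1 i‖ = 1; rw [show q 1 i = e from congrFun hq1 i]; exact he)]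
    exact congrFun hq1 i
  -- family of intermediate loops
  have hLpmem : ∀ (k : ℕ) (s : unitInterval),
      (fun i : Fin m => if (i:ℕ) < k then e else c' i (s:ℝ)) ∈ Z := by
    intro k s
    apply hmemT
    intro i
    split
    · exact he
    · exact hc'norm i (s:ℝ) s.2
  set Lp : ℕ → Path x₀ x₀ := fun k =>
    { toFun := fun s => ⟨fun i => if (i:ℕ) < k then e else c' i (s:ℝ), hLpmem k s⟩
      continuous_toFun := by
        apply Continuous.subtype_mk
        apply continuous_pi; intro i
        split
        · exact continuous_const
        · exact (hc'cont i).comp_continuous continuous_subtype_val fun s => s.2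
      source' := by
        apply Subtype.ext; funext i
        dsimp only
        rw [Set.Icc.coe_zero, hc'0 i]
        split <;> rfl
      target' := by
        apply Subtype.ext; funext i
        dsimp only
        rw [Set.Icc.coe_one, hc'1 i]
        split <;> rfl } with hLpdef
  -- homotopy from δ to Lp 0
  have hH1 : δ.Homotopic (Lp 0) := by
    have hmem : ∀ ts : unitInterval × unitInterval,
        (fun i => (1 - (ts.1:ℝ)) • q (ts.2:ℝ) i + (ts.1:ℝ) • c' i (ts.2:ℝ)) ∈ Z := by
      rintro ⟨t, s⟩
      obtain ⟨τ, hτ, hle, hout⟩ := hqmem (s:ℝ)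
      have ht0 : (0:ℝ) ≤ (t:ℝ) := t.2.1
      have ht1 : (t:ℝ) ≤ 1 := t.2.2
      refine ⟨τ.filter (fun i => ‖q (s:ℝ) i‖ < 1), hK.2 τ hτ _ (Finset.filter_subset _ _),
        ?_, ?_⟩
      · intro i
        dsimp only
        calc ‖(1 - (t:ℝ)) • q (s:ℝ) i + (t:ℝ) • c' i (s:ℝ)‖
            ≤ ‖(1 - (t:ℝ)) • q (s:ℝ) i‖ + ‖(t:ℝ) • c' i (s:ℝ)‖ := norm_add_le _ _
          _ = (1 - (t:ℝ)) * ‖q (s:ℝ) i‖ + (t:ℝ) * ‖c' i (s:ℝ)‖ := by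
              rw [norm_smul, norm_smul, Real.norm_eq_abs, Real.norm_eq_abs,
                abs_of_nonneg (by linarith), abs_of_nonneg ht0]
          _ ≤ (1 - (t:ℝ)) * 1 + (t:ℝ) * 1 := by
              apply add_le_add
              · exact mul_le_mul_of_nonneg_left (hle i) (by linarith)
              · exact mul_le_mul_of_nonneg_left ((hc'norm i (s:ℝ) s.2).le) ht0
          _ = 1 := by ring
      · intro i hi
        have hnorm1 : ‖q (s:ℝ) i‖ = 1 := by
          by_cases hiτ : i ∈ τ
          · by_contra hne
            exact hi (Finset.mem_filter.mpr ⟨hiτ, lt_of_le_of_ne (hle i) hne⟩)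
          · exact hout i hiτ
        dsimp only
        rw [hc'eq i (s:ℝ) s.2 hnorm1]
        have hcomb : (1 - (t:ℝ)) • q (s:ℝ) i + (t:ℝ) • q (s:ℝ) i = q (s:ℝ) i := by
          module
        rw [hcomb]
        exact hnorm1
    refine ⟨⟨⟨⟨fun ts => ⟨fun i =>
      (1 - (ts.1:ℝ)) • q (ts.2:ℝ) i + (ts.1:ℝ) • c' i (ts.2:ℝ), hmem ts⟩, ?_⟩, ?_, ?_⟩, ?_⟩⟩
    · apply Continuous.subtype_mk
      apply continuous_pi; intro i
      have hco : Continuous fun ts : unitInterval × unitInterval => (ts.1 : ℝ) :=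
        continuous_subtype_val.comp continuous_fst
      have hso : Continuous fun ts : unitInterval × unitInterval => (ts.2 : ℝ) :=
        continuous_subtype_val.comp continuous_snd
      exact ((continuous_const.sub hco).smul ((hci i).comp hso)).add
        (hco.smul ((hc'cont i).comp_continuous hso fun ts => (ts.2).2))
    · intro s
      apply Subtype.ext; funext i
      show (1 - ((0 : unitInterval) : ℝ)) • q (s:ℝ) i
        + ((0 : unitInterval) : ℝ) • c' i (s:ℝ) = _
      rw [Set.Icc.coe_zero]
      have h5 : q (s:ℝ) i = ((δ s : ↥Z) : Fin m → EuclideanSpace ℝ (Fin n)) i := by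
        rw [hqdef]; dsimp only; rw [δ.extend_extends' s]
      rw [sub_zero, one_smul, zero_smul, add_zero, h5]
      rfl
    · intro s
      apply Subtype.ext; funext i
      show (1 - ((1 : unitInterval) : ℝ)) • q (s:ℝ) i
        + ((1 : unitInterval) : ℝ) • c' i (s:ℝ) = _
      rw [Set.Icc.coe_one]
      have hLv : ((Lp 0 s : ↥Z) : Fin m → EuclideanSpace ℝ (Fin n)) i = c' i (s:ℝ) := by
        simp only [hLpdef, Path.coe_mk_mk]
        rw [if_neg (Nat.not_lt_zero _)]
      rw [sub_self, zero_smul, one_smul, zero_add, ← hLv]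
      rfl
    · intro t x hx
      have hx01 : x = 0 ∨ x = 1 := by
        rcases hx with h | h
        · exact Or.inl h
        · exact Or.inr h
      rcases hx01 with h | h <;> subst h
      · apply Subtype.ext; funext i
        show (1 - (t : ℝ)) • q ((0 : unitInterval):ℝ) i
          + (t : ℝ) • c' i ((0 : unitInterval):ℝ) = _
        rw [Set.Icc.coe_zero, hc'0 i, show q 0 i = e from congrFun hq0 i]
        have h6 : (1 - (t:ℝ)) • e + (t:ℝ) • e = e := by module
        rw [h6]
        show e = ((δ.toContinuousMap 0 : ↥Z) : Fin m → EuclideanSpace ℝ (Fin n)) i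
        have h7 : δ.toContinuousMap 0 = x₀ := δ.source
        rw [h7]
      · apply Subtype.ext; funext i
        show (1 - (t : ℝ)) • q ((1 : unitInterval):ℝ) i
          + (t : ℝ) • c' i ((1 : unitInterval):ℝ) = _
        rw [Set.Icc.coe_one, hc'1 i, show q 1 i = e from congrFun hq1 i]
        have h6 : (1 - (t:ℝ)) • e + (t:ℝ) • e = e := by module
        rw [h6]
        show e = ((δ.toContinuousMap 1 : ↥Z) : Fin m → EuclideanSpace ℝ (Fin n)) i
        have h7 : δ.toContinuousMap 1 = x₀ := δ.target
        rw [h7]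
  have hstep : ∀ k : ℕ, k < m → (Lp k).Homotopic (Lp (k+1)) := by
    intro k hk
    set j : Fin m := ⟨k, hk⟩ with hjdef
    have hmemG : ∀ ts : unitInterval × unitInterval,
        (fun i : Fin m => if (i:ℕ) < k then e else if (i:ℕ) = k
          then (1 - (ts.1:ℝ)) • c' i (ts.2:ℝ) + (ts.1:ℝ) • e
          else c' i (ts.2:ℝ)) ∈ Z := by
      rintro ⟨t, s⟩
      have ht0 : (0:ℝ) ≤ (t:ℝ) := t.2.1
      have ht1 : (t:ℝ) ≤ 1 := t.2.2
      refine ⟨{j}, hvert j, ?_, ?_⟩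
      · intro i
        dsimp only
        split
        · rw [he]
        · split
          · calc ‖(1 - (t:ℝ)) • c' i (s:ℝ) + (t:ℝ) • e‖
                ≤ ‖(1 - (t:ℝ)) • c' i (s:ℝ)‖ + ‖(t:ℝ) • e‖ := norm_add_le _ _
              _ = (1 - (t:ℝ)) * ‖c' i (s:ℝ)‖ + (t:ℝ) * ‖e‖ := by
                  rw [norm_smul, norm_smul, Real.norm_eq_abs, Real.norm_eq_abs,
                    abs_of_nonneg (by linarith), abs_of_nonneg ht0]
              _ = 1 := by rw [he, hc'norm i (s:ℝ) s.2]; ring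
          · rw [hc'norm i (s:ℝ) s.2]
      · intro i hi
        have hik : (i:ℕ) ≠ k := by
          intro h
          exact hi (Finset.mem_singleton.mpr (Fin.ext h))
        dsimp only
        by_cases h1 : (i:ℕ) < k
        · rw [if_pos h1]; exact he
        · rw [if_neg h1, if_neg hik]
          exact hc'norm i (s:ℝ) s.2
    refine ⟨⟨⟨⟨fun ts => ⟨_, hmemG ts⟩, ?_⟩, ?_, ?_⟩, ?_⟩⟩
    · apply Continuous.subtype_mk
      apply continuous_pi; intro i
      have hco : Continuous fun ts : unitInterval × unitInterval => (ts.1 : ℝ) :=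
        continuous_subtype_val.comp continuous_fst
      have hso : Continuous fun ts : unitInterval × unitInterval => (ts.2 : ℝ) :=
        continuous_subtype_val.comp continuous_snd
      have hc'c : Continuous fun ts : unitInterval × unitInterval => c' i (ts.2:ℝ) :=
        (hc'cont i).comp_continuous hso fun ts => (ts.2).2
      split
      · exact continuous_const
      · split
        · exact ((continuous_const.sub hco).smul hc'c).add (hco.smul continuous_const)
        · exact hc'c
    · intro s
      apply Subtype.ext; funext i
      dsimp only
      simp only [hLpdef, Path.coe_mk_mk, ContinuousMap.coe_mk, Set.Icc.coe_zero, sub_zero,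
        one_smul, zero_smul, add_zero]
      split_ifs with h1 h2 <;> first | rfl | omega
    · intro s
      apply Subtype.ext; funext i
      dsimp only
      simp only [hLpdef, Path.coe_mk_mk, ContinuousMap.coe_mk, Set.Icc.coe_one, sub_self,
        zero_smul, one_smul, zero_add]
      split_ifs with h1 h2 <;> first | rfl | omega
    · intro t x hx
      have hx01 : x = 0 ∨ x = 1 := by
        rcases hx with h | h
        · exact Or.inl h
        · exact Or.inr h
      have h6 : (1 - (t:ℝ)) • e + (t:ℝ) • e = e := by module
      rcases hx01 with h | h <;> subst h
      · apply Subtype.ext; funext i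
        dsimp only
        simp only [hLpdef, Path.coe_mk_mk, ContinuousMap.coe_mk, Set.Icc.coe_zero, hc'0, h6]
        split_ifs with h1 h2 <;> first | rfl | omega
      · apply Subtype.ext; funext i
        dsimp only
        simp only [hLpdef, Path.coe_mk_mk, ContinuousMap.coe_mk, Set.Icc.coe_one, hc'1, h6]
        split_ifs with h1 h2 <;> first | rfl | omega
  have hlast : (Lp m).Homotopic (Path.refl x₀) := by
    refine ⟨⟨⟨⟨fun ts => x₀, continuous_const⟩, ?_, ?_⟩, ?_⟩⟩
    · intro s
      apply Subtype.ext; funext i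
      show ((x₀ : ↥Z) : Fin m → EuclideanSpace ℝ (Fin n)) i = _
      simp only [hLpdef, Path.coe_mk_mk, ContinuousMap.coe_mk]
      rw [if_pos i.isLt]
    · intro s
      rfl
    · intro t x hx
      apply Subtype.ext; funext i
      show ((x₀ : ↥Z) : Fin m → EuclideanSpace ℝ (Fin n)) i = _
      simp only [hLpdef, Path.coe_mk_mk, ContinuousMap.coe_mk]
      rw [if_pos i.isLt]
  have hall : ∀ k : ℕ, k ≤ m → (Lp 0).Homotopic (Lp k) := by
    intro k
    induction k with
    | zero => intro _; exact Path.Homotopic.refl _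
    | succ k ih => intro hk; exact (ih (by omega)).trans (hstep k (by omega))
  exact hH1.trans ((hall m le_rfl).trans hlast)
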